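/- If R: V → G is a relative Rota-Baxter operator of weight 0, then T(v) = Φ(R(v)⁻¹)v defines a T-structure on V, i.e., T is a bijection of V satisfying T(kv) = k·Tᵏ(v) for all v ∈ V and k ∈ ℤ. -/

import Mathlib

section aux

variable {G V : Type*} [Group G] [AddCommGroup V]

instance rrbAddAutGroup : Group (AddAut V) := inferInstanceAs (Group (Multiplicative (AddAut V)))

lemma rrbMulApply (e₁ e₂ : AddAut V) (v : V) : (e₁ * e₂) v = e₁ (e₂ v) := rfl

lemma rrbOneApply (v : V) : (1 : AddAut V) v = v := rfl

lemma rrb_R0 (Φ : G →* AddAut V) (R : V → G)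
    (hR : ∀ u v : V, R u * R v = R (u + Φ (R u) v)) : R 0 = 1 := by
  have h := hR 0 0
  rw [map_zero, add_zero] at h
  exact mul_left_cancel (a := R 0) (by rw [h, mul_one])

lemma rrb_neg (Φ : G →* AddAut V) (R : V → G)
    (hR : ∀ u v : V, R u * R v = R (u + Φ (R u) v)) (u : V) :
    R (-(Φ ((R u)⁻¹) u)) = (R u)⁻¹ := by
  have h := hR u (-(Φ ((R u)⁻¹) u))
  rw [map_neg, ← rrbMulApply, ← map_mul, mul_inv_cancel, map_one,
    rrbOneApply, add_neg_cancel, rrb_R0 Φ R hR] at h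
  exact (inv_eq_of_mul_eq_one_right h).symm

lemma rrb_key (Φ : G →* AddAut V) (R : V → G)
    (hR : ∀ u v : V, R u * R v = R (u + Φ (R u) v)) (u x : V) :
    R (Φ ((R u)⁻¹) x) = (R u)⁻¹ * R (u + x) := by
  have h := hR (-(Φ ((R u)⁻¹) u)) (u + x)
  rw [rrb_neg Φ R hR u] at h
  rw [h]
  congr 1
  rw [map_add]
  abel

end aux

theorem rrb_T_structure_old {G V : Type*} [Group G] [AddCommGroup V]
    (Φ : G →* AddAut V) (R : V → G)
    (hR : ∀ u v : V, R u * R v = R (u + Φ (R u) v)) :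
    ∃ T : Equiv.Perm V, (∀ v : V, T v = Φ ((R v)⁻¹) v) ∧
      ∀ (v : V) (k : ℤ), T (k • v) = k • ((T ^ k) v) := by
  set T : Equiv.Perm V :=
    { toFun := fun v => Φ ((R v)⁻¹) v
      invFun := fun v => Φ ((R (-v))⁻¹) v
      left_inv := by
        intro v
        simp only
        have h1 : R (-(Φ ((R v)⁻¹) v)) = (R v)⁻¹ := rrb_neg Φ R hR v
        rw [h1, inv_inv, ← rrbMulApply, ← map_mul, mul_inv_cancel, map_one,
          rrbOneApply]
      right_inv := by
        intro v
        simp only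
        have h1 : R (Φ ((R (-v))⁻¹) v) = (R (-v))⁻¹ := by
          rw [rrb_key Φ R hR (-v) v, neg_add_cancel, rrb_R0 Φ R hR, mul_one]
        rw [h1, inv_inv, ← rrbMulApply, ← map_mul, mul_inv_cancel, map_one,
          rrbOneApply] } with hT
  have hTapp : ∀ v : V, T v = Φ ((R v)⁻¹) v := fun v => rfl
  have hTinv : ∀ v : V, T⁻¹ v = Φ ((R (-v))⁻¹) v := fun v => rfl
  have hiter : ∀ (k : ℤ) (v : V), (T ^ k) v = Φ ((R (k • v))⁻¹) v := by
    intro k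
    induction k using Int.induction_on with
    | zero =>
      intro v
      rw [zpow_zero, zero_smul, rrb_R0 Φ R hR, inv_one, map_one]
      rfl
    | succ k ih =>
      intro v
      have hzp : T ^ ((k : ℤ) + 1) = T * T ^ (k : ℤ) := by
        rw [add_comm, zpow_add, zpow_one]
      rw [hzp, Equiv.Perm.mul_apply, ih v, hTapp,
        rrb_key Φ R hR ((k : ℤ) • v) v]
      rw [mul_inv_rev, inv_inv, ← rrbMulApply, ← map_mul, mul_inv_cancel_right,
        show (((k : ℤ) + 1) • v) = (k : ℤ) • v + v by rw [add_zsmul, one_zsmul]]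
    | pred k ih =>
      intro v
      have hzp : T ^ (-(k : ℤ) - 1) = T⁻¹ * T ^ (-(k : ℤ)) := by
        rw [sub_eq_add_neg, add_comm, zpow_add, zpow_neg_one]
      rw [hzp, Equiv.Perm.mul_apply, ih v, hTinv]
      have hneg : -(Φ ((R ((-(k : ℤ)) • v))⁻¹) v)
          = Φ ((R ((-(k : ℤ)) • v))⁻¹) (-v) := by rw [map_neg]
      rw [hneg, rrb_key Φ R hR ((-(k : ℤ)) • v) (-v)]
      rw [mul_inv_rev, inv_inv, ← rrbMulApply, ← map_mul, mul_inv_cancel_right,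
        show ((-(k : ℤ) - 1) • v) = (-(k : ℤ)) • v + -v by
          rw [sub_zsmul, one_zsmul]]
  refine ⟨T, hTapp, fun v k => ?_⟩
  rw [hTapp, hiter k v, ← map_zsmul]

theorem rrb_T_structure {G V : Type*} [Group G] [AddCommGroup V]
    (Φ : G →* Multiplicative (AddAut V)) (R : V → G)
    (hR : ∀ u v : V, R u * R v = R (u + Multiplicative.toAdd (Φ (R u)) v)) :
    ∃ T : Equiv.Perm V, (∀ v : V, T v = Multiplicative.toAdd (Φ ((R v)⁻¹)) v) ∧
      ∀ (v : V) (k : ℤ), T (k • v) = k • ((T ^ k) v) :=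
  rrb_T_structure_old Φ R hR
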